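/- Suppose 1 ≤ k < n are integers with k(k+1) ≤ n, and distance is measured in the operator norm. Then for every n×n density matrix X, d(X, D_{n,k}) ≤ d((1/n)·I_n, D_{n,k}) = 1/k − 1/n. If instead k(k+1) > n, then for every density matrix X, d(X, D_{n,k}) ≤ d((1/(k+1))·(I_{k+1} ⊕ O_{n−k−1}), D_{n,k}) = 1/(k+1). -/

import Mathlib

open Matrix BigOperators Finset
open scoped ComplexOrder

/-- The singular values of a square complex matrix. -/
noncomputable def singVals {n : ℕ} (A : Matrix (Fin n) (Fin n) ℂ) : Fin n → ℝ :=
  fun i => Real.sqrt ((Matrix.isHermitian_conjTranspose_mul_self A).eigenvalues i)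

/-- The trace norm: the sum of singular values. -/
noncomputable def traceNorm {n : ℕ} (A : Matrix (Fin n) (Fin n) ℂ) : ℝ :=
  ∑ i, singVals A i

/-- A density matrix: positive semidefinite with trace 1. -/
def IsDensity {n : ℕ} (X : Matrix (Fin n) (Fin n) ℂ) : Prop :=
  X.PosSemidef ∧ X.trace = 1

/-- Distance from `X` to the set of density matrices of rank at most `k`,
measured via a given norm `N`. -/
noncomputable def distToLowRank {n : ℕ} (N : Matrix (Fin n) (Fin n) ℂ → ℝ) (k : ℕ)
    (X : Matrix (Fin n) (Fin n) ℂ) : ℝ :=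
  sInf {t | ∃ Y : Matrix (Fin n) (Fin n) ℂ, IsDensity Y ∧ Y.rank ≤ k ∧ t = N (X - Y)}

/-- The operator norm: the largest singular value. -/
noncomputable def matOpNorm {n : ℕ} (A : Matrix (Fin n) (Fin n) ℂ) : ℝ :=
  ⨆ i, singVals A i

/-- The state `(1/m)·(I_m ⊕ O_{n−m})`. -/
noncomputable def stdState (n m : ℕ) : Matrix (Fin n) (Fin n) ℂ :=
  Matrix.diagonal (fun i => if (i : ℕ) < m then (1 / (m : ℂ)) else 0)

lemma matOpNorm_nonneg {n : ℕ} (A : Matrix (Fin n) (Fin n) ℂ) : 0 ≤ matOpNorm A :=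
  Real.iSup_nonneg fun i => Real.sqrt_nonneg _

lemma quad_eq {n : ℕ} (A : Matrix (Fin n) (Fin n) ℂ) (x : Fin n → ℂ) :
    star x ⬝ᵥ ((Aᴴ * A) *ᵥ x) = star (A *ᵥ x) ⬝ᵥ (A *ᵥ x) := by
  rw [star_mulVec, dotProduct_mulVec, dotProduct_mulVec, vecMul_vecMul]

lemma unitary_dot {n : ℕ} {U : Matrix (Fin n) (Fin n) ℂ}
    (hU : U ∈ Matrix.unitaryGroup (Fin n) ℂ) (w : Fin n → ℂ) :
    star (U *ᵥ w) ⬝ᵥ (U *ᵥ w) = star w ⬝ᵥ w := by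
  rw [star_mulVec, dotProduct_mulVec, vecMul_vecMul]
  rw [show Uᴴ * U = 1 from Matrix.mem_unitaryGroup_iff'.mp hU, vecMul_one]

lemma dot_self_re {n : ℕ} (z : Fin n → ℂ) :
    (star z ⬝ᵥ z).re = ∑ i, Complex.normSq (z i) := by
  simp only [dotProduct, Complex.re_sum, Pi.star_apply, RCLike.star_def]
  congr 1; ext i
  rw [mul_comm, Complex.mul_conj]; simp

-- quadratic form of a real-diagonal matrix

lemma diag_quad_re {n : ℕ} (d : Fin n → ℝ) (y : Fin n → ℂ) :
    (star y ⬝ᵥ ((Matrix.diagonal (fun i => (d i : ℂ))) *ᵥ y)).re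
      = ∑ i, d i * Complex.normSq (y i) := by
  simp only [dotProduct, Complex.re_sum, Pi.star_apply, Matrix.mulVec_diagonal,
    RCLike.star_def]
  congr 1; ext i
  rw [show (starRingEnd ℂ) (y i) * ((d i : ℂ) * y i)
      = (d i : ℂ) * ((y i) * (starRingEnd ℂ) (y i)) by ring, Complex.mul_conj]
  simp

lemma quad_le_opNorm_sq {n : ℕ} (hn : 0 < n) (A : Matrix (Fin n) (Fin n) ℂ) (x : Fin n → ℂ) :
    (star (A *ᵥ x) ⬝ᵥ (A *ᵥ x)).re ≤ (matOpNorm A) ^ 2 * (star x ⬝ᵥ x).re := by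
  have : Nonempty (Fin n) := ⟨⟨0, hn⟩⟩
  set hH := Matrix.isHermitian_conjTranspose_mul_self A with hHdef
  set U : Matrix (Fin n) (Fin n) ℂ := (hH.eigenvectorUnitary : Matrix (Fin n) (Fin n) ℂ) with hU
  have hUmem : U ∈ Matrix.unitaryGroup (Fin n) ℂ := hH.eigenvectorUnitary.2
  set y : Fin n → ℂ := (star U) *ᵥ x with hy
  have hyx : star y ⬝ᵥ y = star x ⬝ᵥ x := unitary_dot (Unitary.star_mem hUmem) x
  have hstar : star y = star x ᵥ* U := by
    rw [hy, star_mulVec, Matrix.star_eq_conjTranspose, conjTranspose_conjTranspose]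
  have key : star x ⬝ᵥ ((Aᴴ * A) *ᵥ x)
      = star y ⬝ᵥ ((Matrix.diagonal (fun i => (hH.eigenvalues i : ℂ))) *ᵥ y) := by
    conv_lhs => rw [hH.spectral_theorem, Unitary.conjStarAlgAut_apply]
    rw [← Matrix.mulVec_mulVec, ← Matrix.mulVec_mulVec, ← hU]
    rw [Matrix.dotProduct_mulVec (star x) U, ← hstar, ← hy]
    rfl
  have hbd : ∀ i, hH.eigenvalues i ≤ (matOpNorm A) ^ 2 := by
    intro i
    have h0 : 0 ≤ hH.eigenvalues i := Matrix.eigenvalues_conjTranspose_mul_self_nonneg A i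
    have h1 : Real.sqrt (hH.eigenvalues i) ≤ matOpNorm A :=
      le_ciSup (f := singVals A) (Set.Finite.bddAbove (Set.finite_range _)) i
    calc hH.eigenvalues i = (Real.sqrt (hH.eigenvalues i)) ^ 2 := (Real.sq_sqrt h0).symm
      _ ≤ (matOpNorm A) ^ 2 := by
          exact pow_le_pow_left₀ (Real.sqrt_nonneg _) h1 2
  calc (star (A *ᵥ x) ⬝ᵥ (A *ᵥ x)).re
      = (star x ⬝ᵥ ((Aᴴ * A) *ᵥ x)).re := by rw [quad_eq]
    _ = ∑ i, hH.eigenvalues i * Complex.normSq (y i) := by rw [key, diag_quad_re]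
    _ ≤ ∑ i, (matOpNorm A) ^ 2 * Complex.normSq (y i) := by
        apply Finset.sum_le_sum; intro i _
        exact mul_le_mul_of_nonneg_right (hbd i) (Complex.normSq_nonneg _)
    _ = (matOpNorm A) ^ 2 * (star y ⬝ᵥ y).re := by rw [← Finset.mul_sum, dot_self_re]
    _ = (matOpNorm A) ^ 2 * (star x ⬝ᵥ x).re := by rw [hyx]

lemma dot_self_re_pos {n : ℕ} {z : Fin n → ℂ} (hz : z ≠ 0) : 0 < (star z ⬝ᵥ z).re := by
  rw [dot_self_re]
  obtain ⟨i, hi⟩ : ∃ i, z i ≠ 0 := by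
    by_contra h; push_neg at h; exact hz (funext h)
  exact Finset.sum_pos' (fun i _ => Complex.normSq_nonneg _)
    ⟨i, Finset.mem_univ i, by simpa using hi⟩

lemma opNorm_ge_of_eig {n : ℕ} (hn : 0 < n) {A : Matrix (Fin n) (Fin n) ℂ}
    {v : Fin n → ℂ} {μ : ℝ} (hv : v ≠ 0) (h : A *ᵥ v = (μ : ℂ) • v) :
    |μ| ≤ matOpNorm A := by
  have h2 := quad_le_opNorm_sq hn A v
  rw [h] at h2
  have hs : (star ((μ:ℂ) • v) ⬝ᵥ ((μ:ℂ) • v)).re = μ ^ 2 * (star v ⬝ᵥ v).re := by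
    rw [star_smul, smul_dotProduct, dotProduct_smul]
    simp only [smul_eq_mul, ← mul_assoc, RCLike.star_def, Complex.conj_ofReal]
    rw [show ((μ:ℂ) * (μ:ℂ)) = ((μ^2 : ℝ) : ℂ) by push_cast; ring]
    simp [Complex.mul_re, ← Complex.ofReal_pow]
  rw [hs] at h2
  have hspos : 0 < (star v ⬝ᵥ v).re := dot_self_re_pos hv
  have h3 : μ ^ 2 ≤ (matOpNorm A) ^ 2 := le_of_mul_le_mul_right (by linarith) hspos
  calc |μ| = Real.sqrt (μ ^ 2) := (Real.sqrt_sq_eq_abs μ).symm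
    _ ≤ Real.sqrt ((matOpNorm A) ^ 2) := Real.sqrt_le_sqrt h3
    _ = matOpNorm A := Real.sqrt_sq (matOpNorm_nonneg A)

lemma matOpNorm_le {n : ℕ} (hn : 0 < n) {A : Matrix (Fin n) (Fin n) ℂ} {c : ℝ} (hc : 0 ≤ c)
    (h : ∀ x : Fin n → ℂ, (star (A *ᵥ x) ⬝ᵥ (A *ᵥ x)).re ≤ c ^ 2 * (star x ⬝ᵥ x).re) :
    matOpNorm A ≤ c := by
  have : Nonempty (Fin n) := ⟨⟨0, hn⟩⟩
  apply ciSup_le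
  intro i
  set hH := Matrix.isHermitian_conjTranspose_mul_self A with hHdef
  have h1 : (star (⇑(hH.eigenvectorBasis i)) ⬝ᵥ ⇑(hH.eigenvectorBasis i)) = 1 := by
    have h2 := hH.eigenvectorBasis.orthonormal.1 i
    have h3 := inner_self_eq_norm_sq_to_K (𝕜 := ℂ) (hH.eigenvectorBasis i)
    rw [EuclideanSpace.inner_eq_star_dotProduct] at h3
    rw [dotProduct_comm]
    simpa [h2] using h3
  have hev := hH.eigenvalues_eq i
  rw [quad_eq] at hev
  have h4 := h (⇑(hH.eigenvectorBasis i))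
  rw [h1] at h4
  simp only [Complex.one_re, mul_one] at h4
  have h5 : hH.eigenvalues i ≤ c ^ 2 := by
    rw [hev]; exact h4
  calc singVals A i = Real.sqrt (hH.eigenvalues i) := rfl
    _ ≤ Real.sqrt (c ^ 2) := Real.sqrt_le_sqrt h5
    _ = c := by rw [Real.sqrt_sq hc]

lemma conj_diag_norm_le {n : ℕ} (hn : 0 < n) {U : Matrix (Fin n) (Fin n) ℂ}
    {d : Fin n → ℂ} {c : ℝ} (hU : U ∈ Matrix.unitaryGroup (Fin n) ℂ) (hc : 0 ≤ c)
    (hd : ∀ i, ‖d i‖ ≤ c) :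
    matOpNorm (U * Matrix.diagonal d * star U) ≤ c := by
  apply matOpNorm_le hn hc
  intro x
  rw [← Matrix.mulVec_mulVec, ← Matrix.mulVec_mulVec]
  set y : Fin n → ℂ := star U *ᵥ x with hy
  rw [unitary_dot hU]
  have h1 : (star (Matrix.diagonal d *ᵥ y) ⬝ᵥ (Matrix.diagonal d *ᵥ y)).re
      = ∑ i, Complex.normSq (d i * y i) := by
    rw [dot_self_re]
    congr 1; ext i; rw [Matrix.mulVec_diagonal]
  rw [h1]
  have h2 : (star y ⬝ᵥ y) = star x ⬝ᵥ x := unitary_dot (Unitary.star_mem hU) x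
  rw [← h2, dot_self_re, Finset.mul_sum]
  apply Finset.sum_le_sum
  intro i _
  rw [Complex.normSq_mul]
  have : Complex.normSq (d i) ≤ c ^ 2 := by
    rw [← Complex.sq_norm]
    exact pow_le_pow_left₀ (norm_nonneg _) (hd i) 2
  exact mul_le_mul_of_nonneg_right this (Complex.normSq_nonneg _)

lemma diag_norm_le {n : ℕ} (hn : 0 < n) {d : Fin n → ℂ} {c : ℝ} (hc : 0 ≤ c)
    (hd : ∀ i, ‖d i‖ ≤ c) : matOpNorm (Matrix.diagonal d) ≤ c := by
  have := conj_diag_norm_le hn (U := 1) (Matrix.mem_unitaryGroup_iff.mpr (by simp)) hc hd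
  simpa using this

lemma trace_eq_sum_eigs {n : ℕ} {A : Matrix (Fin n) (Fin n) ℂ} (hA : A.IsHermitian) :
    A.trace = ∑ i, (hA.eigenvalues i : ℂ) := by
  conv_lhs => rw [hA.spectral_theorem, Unitary.conjStarAlgAut_apply]
  rw [Matrix.trace_mul_cycle,
    show (star (hA.eigenvectorUnitary : Matrix (Fin n) (Fin n) ℂ))
        * (hA.eigenvectorUnitary : Matrix (Fin n) (Fin n) ℂ) = 1 from
      Matrix.mem_unitaryGroup_iff'.mp hA.eigenvectorUnitary.2,
    one_mul, Matrix.trace_diagonal]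
  simp [Function.comp]

lemma card_filter_lt {n m : ℕ} (hm : m ≤ n) :
    (Finset.univ.filter (fun i : Fin n => (i : ℕ) < m)).card = m := by
  rw [show Finset.univ.filter (fun i : Fin n => (i : ℕ) < m)
      = Finset.map ⟨Fin.castLE hm, Fin.castLE_injective hm⟩ Finset.univ by
    ext a
    simp only [Finset.mem_filter, Finset.mem_univ, true_and, Finset.mem_map,
      Function.Embedding.coeFn_mk]
    constructor
    · intro h
      exact ⟨⟨a, h⟩, by simp [Fin.ext_iff]⟩
    · rintro ⟨b, rfl⟩
      exact b.2]
  simp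

lemma stdState_isDensity {n m : ℕ} (hm1 : 1 ≤ m) (hmn : m ≤ n) : IsDensity (stdState n m) := by
  have hm0 : (m : ℂ) ≠ 0 := Nat.cast_ne_zero.mpr (by omega)
  constructor
  · apply Matrix.posSemidef_diagonal_iff.mpr
    intro i
    by_cases h : (i : ℕ) < m <;> simp only [h, if_true, if_false]
    · rw [show (1 / (m:ℂ)) = ((1/(m:ℝ) : ℝ) : ℂ) by push_cast; ring]
      rw [Complex.zero_le_real]
      positivity
    · exact le_refl 0
  · rw [stdState, Matrix.trace_diagonal, ← Finset.sum_filter, Finset.sum_const, card_filter_lt hmn]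
    simp [hm0]

lemma stdState_rank {n m : ℕ} (hm1 : 1 ≤ m) (hmn : m ≤ n) : (stdState n m).rank = m := by
  have hm0 : (m : ℂ) ≠ 0 := Nat.cast_ne_zero.mpr (by omega)
  rw [stdState, Matrix.rank_diagonal, Fintype.card_subtype]
  rw [show (Finset.univ.filter fun i : Fin n => (if (i : ℕ) < m then (1 / (m : ℂ)) else 0) ≠ 0)
      = Finset.univ.filter (fun i : Fin n => (i : ℕ) < m) by
    apply Finset.filter_congr
    intro i _
    by_cases h : (i : ℕ) < m <;> simp [h, hm0]]
  exact card_filter_lt hmn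

lemma distSet_bddBelow {n k : ℕ} (X : Matrix (Fin n) (Fin n) ℂ) :
    BddBelow {t | ∃ Y : Matrix (Fin n) (Fin n) ℂ,
      IsDensity Y ∧ Y.rank ≤ k ∧ t = matOpNorm (X - Y)} := by
  refine ⟨0, ?_⟩
  rintro t ⟨Y, -, -, rfl⟩
  exact matOpNorm_nonneg _

lemma dist_le {n k : ℕ} {X Y : Matrix (Fin n) (Fin n) ℂ} {c : ℝ}
    (hY : IsDensity Y) (hr : Y.rank ≤ k) (hc : matOpNorm (X - Y) ≤ c) :
    distToLowRank matOpNorm k X ≤ c :=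
  csInf_le_of_le (distSet_bddBelow X) ⟨Y, hY, hr, rfl⟩ hc

lemma dist_ge {n k : ℕ} {X : Matrix (Fin n) (Fin n) ℂ} {c : ℝ}
    (hne : ∃ Y : Matrix (Fin n) (Fin n) ℂ, IsDensity Y ∧ Y.rank ≤ k)
    (h : ∀ Y : Matrix (Fin n) (Fin n) ℂ, IsDensity Y → Y.rank ≤ k →
      c ≤ matOpNorm (X - Y)) :
    c ≤ distToLowRank matOpNorm k X := by
  obtain ⟨Y0, hY0, hr0⟩ := hne
  have hne2 : {t | ∃ Y : Matrix (Fin n) (Fin n) ℂ,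
      IsDensity Y ∧ Y.rank ≤ k ∧ t = matOpNorm (X - Y)}.Nonempty :=
    ⟨matOpNorm (X - Y0), ⟨Y0, hY0, hr0, rfl⟩⟩
  apply le_csInf hne2
  rintro t ⟨Y, hY, hr, rfl⟩
  exact h Y hY hr

lemma exists_topk {n : ℕ} (f : Fin n → ℝ) :
    ∀ k, k ≤ n → ∃ S : Finset (Fin n), S.card = k ∧ ∀ i ∈ S, ∀ j ∉ S, f j ≤ f i := by
  intro k
  induction k with
  | zero => intro _; exact ⟨∅, Finset.card_empty, by simp⟩
  | succ k ih =>
    intro hk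
    obtain ⟨S, hScard, hStop⟩ := ih (by omega)
    have hne : (Finset.univ \ S).Nonempty := by
      rw [← Finset.card_pos, Finset.card_sdiff_of_subset (Finset.subset_univ S)]
      simp [hScard]
      omega
    obtain ⟨j0, hj0mem, hj0max⟩ := Finset.exists_max_image (Finset.univ \ S) f hne
    have hj0S : j0 ∉ S := (Finset.mem_sdiff.mp hj0mem).2
    refine ⟨insert j0 S, ?_, ?_⟩
    · rw [Finset.card_insert_of_notMem hj0S, hScard]
    · intro i hi j hj
      have hjS : j ∉ S := fun h => hj (Finset.mem_insert_of_mem h)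
      have hjj0 : j ≠ j0 := fun h => hj (h ▸ Finset.mem_insert_self j0 S)
      rcases Finset.mem_insert.mp hi with rfl | hiS
      · exact hj0max j (Finset.mem_sdiff.mpr ⟨Finset.mem_univ j, hjS⟩)
      · exact hStop i hiS j hjS

lemma exists_good_Y {n k : ℕ} (hk1 : 1 ≤ k) (hkn : k < n)
    {X : Matrix (Fin n) (Fin n) ℂ} (hX : IsDensity X) {c : ℝ}
    (hc1 : ((n:ℝ) - k) / ((n:ℝ) * k) ≤ c) (hc2 : 1 / ((k:ℝ) + 1) ≤ c) :
    ∃ Y : Matrix (Fin n) (Fin n) ℂ,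
      IsDensity Y ∧ Y.rank ≤ k ∧ matOpNorm (X - Y) ≤ c := by
  have hn : 0 < n := by omega
  have hnR : (0:ℝ) < n := by exact_mod_cast hn
  have hkR : (0:ℝ) < k := by exact_mod_cast hk1
  have hc0 : 0 ≤ c := le_trans (by positivity) hc2
  have hH : X.IsHermitian := hX.1.1
  set lam := hH.eigenvalues with hlam
  have hlam0 : ∀ i, 0 ≤ lam i := hX.1.eigenvalues_nonneg
  have hsumlam : ∑ i, lam i = 1 := by
    have h1 := trace_eq_sum_eigs hH
    rw [hX.2] at h1
    have h2 : ((∑ i, lam i : ℝ) : ℂ) = ((1:ℝ):ℂ) := by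
      push_cast
      rw [← h1]
    exact_mod_cast h2
  obtain ⟨S, hScard, hStop⟩ := exists_topk lam k (le_of_lt hkn)
  set t := ∑ j ∈ Sᶜ, lam j with ht
  set head := ∑ i ∈ S, lam i with hhead
  have hht : head + t = 1 := by
    rw [hhead, ht, Finset.sum_add_sum_compl]
    exact hsumlam
  have ht0 : 0 ≤ t := Finset.sum_nonneg fun j _ => hlam0 j
  have hcardc : (Sᶜ.card : ℝ) = (n:ℝ) - k := by
    rw [Finset.card_compl, hScard, Fintype.card_fin, Nat.cast_sub (le_of_lt hkn)]
  have hkey1 : (k:ℝ) * t ≤ ((n:ℝ) - k) * head := by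
    have h1 : ∀ i ∈ S, t ≤ ((n:ℝ) - k) * lam i := by
      intro i hi
      calc t = ∑ j ∈ Sᶜ, lam j := ht
        _ ≤ ∑ j ∈ Sᶜ, lam i :=
            Finset.sum_le_sum fun j hj => hStop i hi j (Finset.mem_compl.mp hj)
        _ = (Sᶜ.card : ℝ) * lam i := by rw [Finset.sum_const, nsmul_eq_mul]
        _ = ((n:ℝ) - k) * lam i := by rw [hcardc]
    calc (k:ℝ) * t = ∑ _i ∈ S, t := by rw [Finset.sum_const, hScard, nsmul_eq_mul]
      _ ≤ ∑ i ∈ S, ((n:ℝ) - k) * lam i := Finset.sum_le_sum h1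
      _ = ((n:ℝ) - k) * head := by rw [← Finset.mul_sum, hhead]
  have hheadt : head = 1 - t := by linarith
  have htle : t * (n:ℝ) ≤ (n:ℝ) - k := by nlinarith [hkey1, hheadt]
  have htdiv : t / k ≤ c := by
    refine le_trans ?_ hc1
    rw [div_le_div_iff₀ hkR (by positivity)]
    nlinarith [htle, hkR.le]
  have hkey2 : ∀ j ∈ Sᶜ, lam j ≤ c := by
    intro j hj
    have hjS := Finset.mem_compl.mp hj
    have h3 : (k:ℝ) * lam j ≤ head := by
      calc (k:ℝ) * lam j = ∑ _i ∈ S, lam j := by rw [Finset.sum_const, hScard, nsmul_eq_mul]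
        _ ≤ ∑ i ∈ S, lam i := Finset.sum_le_sum fun i hi => hStop i hi j hjS
        _ = head := hhead.symm
    have h4 : lam j ≤ t := Finset.single_le_sum (f := lam) (fun i _ => hlam0 i) hj
    have h5 : lam j ≤ 1 / ((k:ℝ) + 1) := by
      rw [le_div_iff₀ (by positivity)]
      nlinarith
    exact h5.trans hc2
  set mu : Fin n → ℝ := fun i => if i ∈ S then lam i + t / k else 0 with hmu
  have hmu0 : ∀ i, 0 ≤ mu i := by
    intro i
    rw [hmu]
    dsimp only
    split
    · have : 0 ≤ t / k := by positivity
      linarith [hlam0 i]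
    · exact le_refl 0
  have hsummu : ∑ i, mu i = 1 := by
    rw [hmu]
    dsimp only
    rw [Finset.sum_ite_mem, Finset.univ_inter, Finset.sum_add_distrib, Finset.sum_const, hScard,
      nsmul_eq_mul, mul_div_cancel₀ _ (ne_of_gt hkR), ← hhead, hht]
  set U : Matrix (Fin n) (Fin n) ℂ := (hH.eigenvectorUnitary : Matrix (Fin n) (Fin n) ℂ) with hU
  have hUmem : U ∈ Matrix.unitaryGroup (Fin n) ℂ := hH.eigenvectorUnitary.2
  set Y := U * Matrix.diagonal (fun i => (mu i : ℂ)) * star U with hY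
  have hYpsd : Y.PosSemidef := by
    rw [hY, Matrix.star_eq_conjTranspose]
    exact (Matrix.posSemidef_diagonal_iff.mpr
      fun i => Complex.zero_le_real.mpr (hmu0 i)).mul_mul_conjTranspose_same U
  have hYtr : Y.trace = 1 := by
    rw [hY, Matrix.trace_mul_cycle,
      show star U * U = 1 from Matrix.mem_unitaryGroup_iff'.mp hUmem, one_mul,
      Matrix.trace_diagonal, ← Complex.ofReal_sum, hsummu, Complex.ofReal_one]
  have hYrank : Y.rank ≤ k := by
    calc Y.rank ≤ (U * Matrix.diagonal fun i => (mu i : ℂ)).rank := by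
          rw [hY]; exact Matrix.rank_mul_le_left _ _
      _ ≤ (Matrix.diagonal fun i => (mu i : ℂ)).rank := Matrix.rank_mul_le_right _ _
      _ = Fintype.card {i // (mu i : ℂ) ≠ 0} := Matrix.rank_diagonal _
      _ ≤ k := by
          rw [Fintype.card_subtype, ← hScard]
          apply Finset.card_le_card
          intro i hi
          rw [Finset.mem_filter] at hi
          by_contra hiS
          apply hi.2
          rw [hmu]
          simp [hiS]
  have hXY : X - Y = U * Matrix.diagonal (fun i => ((lam i - mu i : ℝ) : ℂ)) * star U := by
    conv_lhs => rw [hH.spectral_theorem, Unitary.conjStarAlgAut_apply, ← hU, hY]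
    rw [← sub_mul, ← mul_sub, Matrix.diagonal_sub]
    congr 2
    funext i j
    rw [Matrix.diagonal_apply, Matrix.diagonal_apply]
    split
    · show (RCLike.ofReal (lam i) : ℂ) - (mu i : ℂ) = _
      rw [show (RCLike.ofReal (lam i) : ℂ) = ((lam i : ℝ) : ℂ) from rfl]
      push_cast
      ring
    · rfl
  refine ⟨Y, ⟨hYpsd, hYtr⟩, hYrank, ?_⟩
  rw [hXY]
  apply conj_diag_norm_le hn hUmem hc0
  intro i
  rw [Complex.norm_real, Real.norm_eq_abs]
  by_cases hiS : i ∈ S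
  · rw [hmu]
    simp only [hiS, if_true]
    rw [show lam i - (lam i + t / k) = -(t / k) by ring, abs_neg,
      abs_of_nonneg (by positivity)]
    exact htdiv
  · rw [hmu]
    simp only [hiS, if_false]
    rw [sub_zero, abs_of_nonneg (hlam0 i)]
    exact hkey2 i (Finset.mem_compl.mpr hiS)

lemma sum_eigs_one {n : ℕ} {A : Matrix (Fin n) (Fin n) ℂ} (hA : A.IsHermitian)
    (htr : A.trace = 1) : ∑ i, hA.eigenvalues i = 1 := by
  have h1 := trace_eq_sum_eigs hA
  rw [htr] at h1
  have h2 : ((∑ i, hA.eigenvalues i : ℝ) : ℂ) = ((1:ℝ):ℂ) := by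
    push_cast
    rw [← h1]
  exact_mod_cast h2

lemma lower_1 {n k : ℕ} (hk1 : 1 ≤ k) (hkn : k < n) {Y : Matrix (Fin n) (Fin n) ℂ}
    (hY : IsDensity Y) (hr : Y.rank ≤ k) :
    1 / (k:ℝ) - 1 / (n:ℝ) ≤ matOpNorm (stdState n n - Y) := by
  have hn : 0 < n := by omega
  have hkR : (0:ℝ) < k := by exact_mod_cast hk1
  have hH : Y.IsHermitian := hY.1.1
  have hnu0 : ∀ i, 0 ≤ hH.eigenvalues i := hY.1.eigenvalues_nonneg
  have hsum : ∑ i, hH.eigenvalues i = 1 := sum_eigs_one hH hY.2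
  have hexists : ∃ i, 1 / (k:ℝ) ≤ hH.eigenvalues i := by
    by_contra h
    push_neg at h
    set supp := Finset.univ.filter (fun i => hH.eigenvalues i ≠ 0) with hsupp
    have hsupp_card : (supp.card : ℝ) ≤ (k : ℝ) := by
      have h1 : supp.card = Fintype.card {i // hH.eigenvalues i ≠ 0} :=
        (Fintype.card_subtype _).symm
      have h2 : Y.rank = Fintype.card {i // hH.eigenvalues i ≠ 0} :=
        hH.rank_eq_card_non_zero_eigs
      have : supp.card ≤ k := by omega
      exact_mod_cast this
    have hsum2 : ∑ i ∈ supp, hH.eigenvalues i = 1 := by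
      rw [hsupp, Finset.sum_filter_ne_zero]
      exact hsum
    have hne : supp.Nonempty := by
      by_contra he
      rw [Finset.not_nonempty_iff_eq_empty] at he
      rw [he, Finset.sum_empty] at hsum2
      norm_num at hsum2
    have hlt : (1:ℝ) < 1 := by
      calc (1:ℝ) = ∑ i ∈ supp, hH.eigenvalues i := hsum2.symm
        _ < ∑ _i ∈ supp, (1 / (k:ℝ)) :=
            Finset.sum_lt_sum_of_nonempty hne (fun i _ => h i)
        _ = (supp.card : ℝ) * (1 / (k:ℝ)) := by rw [Finset.sum_const, nsmul_eq_mul]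
        _ ≤ (k:ℝ) * (1 / (k:ℝ)) := by
            apply mul_le_mul_of_nonneg_right hsupp_card
            positivity
        _ = 1 := by field_simp
    exact absurd hlt (lt_irrefl 1)
  obtain ⟨i, hi⟩ := hexists
  have hvne : (⇑(hH.eigenvectorBasis i) : Fin n → ℂ) ≠ 0 := by
    intro h0
    apply hH.eigenvectorBasis.orthonormal.ne_zero i
    ext j
    exact congrFun h0 j
  have heig : (stdState n n - Y) *ᵥ ⇑(hH.eigenvectorBasis i)
      = ((1 / (n:ℝ) - hH.eigenvalues i : ℝ) : ℂ) • ⇑(hH.eigenvectorBasis i) := by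
    rw [Matrix.sub_mulVec]
    have h1 : stdState n n *ᵥ ⇑(hH.eigenvectorBasis i)
        = ((1 / (n:ℝ) : ℝ) : ℂ) • ⇑(hH.eigenvectorBasis i) := by
      funext j
      simp only [stdState, Matrix.mulVec_diagonal, j.isLt, if_true, Pi.smul_apply,
        smul_eq_mul]
      push_cast
      ring
    have h2 : Y *ᵥ ⇑(hH.eigenvectorBasis i)
        = ((hH.eigenvalues i : ℝ) : ℂ) • ⇑(hH.eigenvectorBasis i) := by
      rw [hH.mulVec_eigenvectorBasis]
      funext j
      simp [Pi.smul_apply, Complex.real_smul]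
    rw [h1, h2]
    funext j
    simp only [Pi.sub_apply, Pi.smul_apply, smul_eq_mul]
    push_cast
    ring
  have hge := opNorm_ge_of_eig hn hvne heig
  have habs : 1 / (k:ℝ) - 1 / (n:ℝ) ≤ |1 / (n:ℝ) - hH.eigenvalues i| := by
    rw [abs_sub_comm]
    calc 1 / (k:ℝ) - 1 / (n:ℝ) ≤ hH.eigenvalues i - 1 / (n:ℝ) := by linarith
      _ ≤ |hH.eigenvalues i - 1 / (n:ℝ)| := le_abs_self _
  linarith

lemma lower_2 {n k : ℕ} (hk1 : 1 ≤ k) (hkn : k < n) {Y : Matrix (Fin n) (Fin n) ℂ}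
    (hY : IsDensity Y) (hr : Y.rank ≤ k) :
    1 / ((k:ℝ) + 1) ≤ matOpNorm (stdState n (k + 1) - Y) := by
  have hn : 0 < n := by omega
  set P := Matrix.diagonal (fun i : Fin n => if (i:ℕ) < k + 1 then (1:ℂ) else 0) with hP
  set W := LinearMap.range P.mulVecLin with hW
  set K := LinearMap.ker Y.mulVecLin with hK
  have hWrank : Module.finrank ℂ W = k + 1 := by
    have h1 : Module.finrank ℂ W = P.rank := rfl
    rw [h1, hP, Matrix.rank_diagonal, Fintype.card_subtype]
    rw [show (Finset.univ.filter fun i : Fin n =>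
        (if (i : ℕ) < k + 1 then (1:ℂ) else 0) ≠ 0)
        = Finset.univ.filter (fun i : Fin n => (i : ℕ) < k + 1) by
      apply Finset.filter_congr
      intro i _
      by_cases h : (i : ℕ) < k + 1 <;> simp [h]]
    exact card_filter_lt (by omega)
  have hKrank : n ≤ Module.finrank ℂ K + k := by
    have h1 := LinearMap.finrank_range_add_finrank_ker Y.mulVecLin
    rw [Module.finrank_fintype_fun_eq_card, Fintype.card_fin, ← hK] at h1
    have h2 : Y.rank = Module.finrank ℂ (LinearMap.range Y.mulVecLin) := rfl
    omega
  have hnebot : (W ⊓ K : Submodule ℂ (Fin n → ℂ)) ≠ ⊥ := by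
    intro h0
    have h3 := Submodule.finrank_sup_add_finrank_inf_eq W K
    rw [h0, finrank_bot, add_zero, hWrank] at h3
    have h4 : Module.finrank ℂ ((W ⊔ K : Submodule ℂ (Fin n → ℂ))) ≤ n := by
      have h5 := Submodule.finrank_le (W ⊔ K : Submodule ℂ (Fin n → ℂ))
      rwa [Module.finrank_fintype_fun_eq_card, Fintype.card_fin] at h5
    rw [h3] at h4
    omega
  obtain ⟨v, hvmem, hvne⟩ := Submodule.exists_mem_ne_zero_of_ne_bot hnebot
  have hvW : v ∈ W := (Submodule.mem_inf.mp hvmem).1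
  have hvK : v ∈ K := (Submodule.mem_inf.mp hvmem).2
  obtain ⟨w, hw⟩ := hvW
  have hvzero : ∀ j : Fin n, ¬((j:ℕ) < k + 1) → v j = 0 := by
    intro j hj
    rw [← hw]
    simp [Matrix.mulVecLin_apply, hP, Matrix.mulVec_diagonal, hj]
    intro h
    exact absurd (Nat.lt_succ_of_le h) hj
  have hYv : Y *ᵥ v = 0 := hvK
  have heig : (stdState n (k + 1) - Y) *ᵥ v = ((1 / ((k:ℝ) + 1) : ℝ) : ℂ) • v := by
    rw [Matrix.sub_mulVec, hYv, sub_zero]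
    funext j
    rw [stdState, Matrix.mulVec_diagonal]
    by_cases hj : (j:ℕ) < k + 1
    · simp only [hj, if_true, Pi.smul_apply, smul_eq_mul]
      push_cast
      ring
    · simp only [hj, if_false, Pi.smul_apply, smul_eq_mul, hvzero j hj, zero_mul, mul_zero]
  have hge := opNorm_ge_of_eig hn hvne heig
  calc 1 / ((k:ℝ) + 1) = |1 / ((k:ℝ) + 1)| := (abs_of_nonneg (by positivity)).symm
    _ ≤ _ := hge

theorem stmt_19 (n k : ℕ) (hk1 : 1 ≤ k) (hkn : k < n) :
    (k * (k + 1) ≤ n →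
      ∀ X : Matrix (Fin n) (Fin n) ℂ, IsDensity X →
        distToLowRank matOpNorm k X ≤ distToLowRank matOpNorm k (stdState n n) ∧
          distToLowRank matOpNorm k (stdState n n) = 1 / (k : ℝ) - 1 / (n : ℝ)) ∧
    (n < k * (k + 1) →
      ∀ X : Matrix (Fin n) (Fin n) ℂ, IsDensity X →
        distToLowRank matOpNorm k X ≤ distToLowRank matOpNorm k (stdState n (k + 1)) ∧
          distToLowRank matOpNorm k (stdState n (k + 1)) = 1 / ((k : ℝ) + 1)) := by
  have hn : 0 < n := by omega
  have hnR : (0:ℝ) < n := by exact_mod_cast hn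
  have hkR : (0:ℝ) < k := by exact_mod_cast hk1
  constructor
  · intro hcase X hX
    have hcaseR : (k:ℝ) * ((k:ℝ) + 1) ≤ n := by exact_mod_cast hcase
    have hc1' : ((n:ℝ) - k) / ((n:ℝ) * k) = 1 / (k:ℝ) - 1 / (n:ℝ) := by
      rw [div_sub_div 1 1 (ne_of_gt hkR) (ne_of_gt hnR), one_mul, mul_one, mul_comm (k:ℝ) (n:ℝ)]
    have hc2 : 1 / ((k:ℝ) + 1) ≤ 1 / (k:ℝ) - 1 / (n:ℝ) := by
      rw [← hc1', div_le_div_iff₀ (by positivity) (by positivity)]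
      nlinarith
    have hdens : IsDensity (stdState n n) := stdState_isDensity hn le_rfl
    have heq : distToLowRank matOpNorm k (stdState n n) = 1 / (k:ℝ) - 1 / (n:ℝ) := by
      obtain ⟨Y0, hY0, hr0, hnorm0⟩ := exists_good_Y hk1 hkn hdens hc1'.le hc2
      apply le_antisymm
      · exact dist_le hY0 hr0 hnorm0
      · exact dist_ge ⟨Y0, hY0, hr0⟩ (fun Y hY hr => lower_1 hk1 hkn hY hr)
    refine ⟨?_, heq⟩
    rw [heq]
    obtain ⟨Y1, hY1, hr1, hnorm1⟩ := exists_good_Y hk1 hkn hX hc1'.le hc2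
    exact dist_le hY1 hr1 hnorm1
  · intro hcase X hX
    have hcaseR : (n:ℝ) ≤ (k:ℝ) * ((k:ℝ) + 1) := by
      have h6 : n ≤ k * (k + 1) := le_of_lt hcase
      exact_mod_cast h6
    have hc1 : ((n:ℝ) - k) / ((n:ℝ) * k) ≤ 1 / ((k:ℝ) + 1) := by
      rw [div_le_div_iff₀ (by positivity) (by positivity)]
      nlinarith
    have hdens : IsDensity (stdState n (k + 1)) :=
      stdState_isDensity (Nat.succ_le_succ (Nat.zero_le k)) hkn
    have heq : distToLowRank matOpNorm k (stdState n (k + 1)) = 1 / ((k:ℝ) + 1) := by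
      obtain ⟨Y0, hY0, hr0, hnorm0⟩ := exists_good_Y hk1 hkn hdens hc1 (le_refl _)
      apply le_antisymm
      · exact dist_le hY0 hr0 hnorm0
      · exact dist_ge ⟨Y0, hY0, hr0⟩ (fun Y hY hr => lower_2 hk1 hkn hY hr)
    refine ⟨?_, heq⟩
    rw [heq]
    obtain ⟨Y1, hY1, hr1, hnorm1⟩ := exists_good_Y hk1 hkn hX hc1 (le_refl _)
    exact dist_le hY1 hr1 hnorm1
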